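/- For any integer q ≥ 2, there exists a 2-regular (q², 2q, 2, (q−1)q²) base PDA with parameter λ = 1. -/

import Mathlib

open Finset

/-- A (K,F,Z,S) placement delivery array: an F×K array over {*} ∪ [1:S],
    with `none` playing the role of `*`. Columns are indexed by `κ`. -/
def IsPDA {F S : ℕ} {κ : Type} [Fintype κ]
    (Z : ℕ) (P : Fin F → κ → Option (Fin S)) : Prop :=
  -- C1: each column contains exactly Z stars
  (∀ k : κ, (Finset.univ.filter (fun j : Fin F => P j k = none)).card = Z) ∧
  -- C2: every integer occurs at least once
  (∀ s : Fin S, ∃ j k, P j k = some s) ∧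
  -- C3: the 2×2 star-crossing condition
  (∀ j₁ j₂ : Fin F, ∀ k₁ k₂ : κ, ∀ s : Fin S,
    (j₁, k₁) ≠ (j₂, k₂) → P j₁ k₁ = some s → P j₂ k₂ = some s →
    P j₁ k₂ = none ∧ P j₂ k₁ = none)

/-- `P` is `g`-regular: every integer appears exactly `g` times. -/
def PDARegular {F S : ℕ} {κ : Type} [Fintype κ]
    (g : ℕ) (P : Fin F → κ → Option (Fin S)) : Prop :=
  ∀ s : Fin S, (Finset.univ.filter
    (fun jk : Fin F × κ => P jk.1 jk.2 = some s)).card = g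

/-- A base PDA with parameter `lam`: a PDA with `lam ∣ F`, `lam ∣ Z`,
    star pattern row-periodic with period `F/lam` (C4), and a star-row
    assignment `φ` into the first `F/lam` rows with all fibers of size
    `lam*S/F` (C5, stated multiplicatively: `card * F = lam * S`). -/
def IsBasePDA {F S : ℕ} {κ : Type} [Fintype κ]
    (Z lam : ℕ) (P : Fin F → κ → Option (Fin S)) : Prop :=
  IsPDA Z P ∧ 0 < lam ∧ lam ∣ F ∧ lam ∣ Z ∧
  (∀ j₁ j₂ : Fin F, ∀ k : κ, j₁.val % (F / lam) = j₂.val % (F / lam) →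
    (P j₁ k = none ↔ P j₂ k = none)) ∧
  (∃ φ : Fin S → Fin F, (∀ s, (φ s).val < F / lam) ∧
    (∀ s : Fin S, ∀ j : Fin F, ∀ k : κ, P j k = some s → P (φ s) k = none) ∧
    (∀ r : Fin F, r.val < F / lam →
      (Finset.univ.filter (fun s : Fin S => φ s = r)).card * F = lam * S))

namespace ExistsBasePDAAux

/-- mixed-radix encoding of `(w,u,v)` with `u ≠ v`, all `< q`. -/
def enc (q w u v : ℕ) : ℕ :=
  w * (q * (q-1)) + u * (q-1) + (if v < u then v else v - 1)

def dw (q s : ℕ) : ℕ := s / (q * (q-1))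
def du (q s : ℕ) : ℕ := (s % (q * (q-1))) / (q-1)
def dt (q s : ℕ) : ℕ := (s % (q * (q-1))) % (q-1)
def dv (q s : ℕ) : ℕ := if dt q s < du q s then dt q s else dt q s + 1

lemma divmod (M a b : ℕ) (hM : 0 < M) (hb : b < M) :
    (a * M + b) / M = a ∧ (a * M + b) % M = b := by
  rw [mul_comm, Nat.mul_add_div hM, Nat.div_eq_of_lt hb, Nat.mul_add_mod,
    Nat.mod_eq_of_lt hb]
  simp

lemma c_lt (q u v : ℕ) (hq : 2 ≤ q) (hu : u < q) (hv : v < q) (huv : u ≠ v) :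
    (if v < u then v else v - 1) < q - 1 := by
  split <;> omega

lemma enc_lt (q w u v : ℕ) (hq : 2 ≤ q) (hw : w < q) (hu : u < q) (hv : v < q)
    (huv : u ≠ v) : enc q w u v < (q-1) * q^2 := by
  have hc := c_lt q u v hq hu hv huv
  obtain ⟨p, rfl⟩ : ∃ p, q = p + 2 := ⟨q-2, by omega⟩
  unfold enc
  set c := (if v < u then v else v - 1) with hcdef
  have e1 : p + 2 - 1 = p + 1 := rfl
  rw [e1] at hc ⊢
  have m1 : w * ((p+2) * (p+1)) ≤ (p+1) * ((p+2) * (p+1)) :=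
    Nat.mul_le_mul_right _ (by omega)
  have m2 : u * (p+1) ≤ (p+1) * (p+1) := Nat.mul_le_mul_right _ (by omega)
  have key : (p+1) * ((p+2) * (p+1)) + (p+1) * (p+1) + (p+1) ≤ (p+1) * (p+2)^2 := by
    ring_nf
    nlinarith
  omega

lemma decode_enc (q w u v : ℕ) (hq : 2 ≤ q) (hw : w < q) (hu : u < q) (hv : v < q)
    (huv : u ≠ v) :
    dw q (enc q w u v) = w ∧ du q (enc q w u v) = u ∧ dv q (enc q w u v) = v ∧
      dt q (enc q w u v) = (if v < u then v else v - 1) := by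
  have hc := c_lt q u v hq hu hv huv
  set c := (if v < u then v else v - 1) with hcdef
  have hM : 0 < q * (q-1) := Nat.mul_pos (by omega) (by omega)
  have hr : u * (q-1) + c < q * (q-1) := by
    have : u * (q-1) ≤ (q-1) * (q-1) := Nat.mul_le_mul_right _ (by omega)
    nlinarith
  have h1 := divmod (q*(q-1)) w (u * (q-1) + c) hM hr
  have henc : enc q w u v = w * (q * (q-1)) + (u * (q-1) + c) := by
    unfold enc; omega
  have h2 := divmod (q-1) u c (by omega) hc
  have hdw : dw q (enc q w u v) = w := by rw [dw, henc]; exact h1.1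
  have hmod : enc q w u v % (q * (q-1)) = u * (q-1) + c := by rw [henc]; exact h1.2
  have hdu : du q (enc q w u v) = u := by rw [du, hmod]; exact h2.1
  have hdt : dt q (enc q w u v) = c := by rw [dt, hmod]; exact h2.2
  refine ⟨hdw, hdu, ?_, hdt⟩
  rw [dv, hdt, hdu]
  rcases lt_or_gt_of_ne huv with h | h
  · have : ¬ v < u := by omega
    simp only [this, if_false] at hcdef
    have : ¬ c < u := by omega
    simp [this]; omega
  · simp only [h, if_true] at hcdef
    have : c < u := by omega
    simp only [if_pos this]
    omega

lemma decode_lt (q s : ℕ) (hq : 2 ≤ q) (hs : s < (q-1) * q^2) :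
    dw q s < q ∧ du q s < q ∧ dv q s < q ∧ dv q s ≠ du q s ∧
      enc q (dw q s) (du q s) (dv q s) = s ∧ dt q s < q - 1 ∧
      dw q s * (q * (q-1)) + du q s * (q-1) + dt q s = s := by
  have hM : 0 < q * (q-1) := by
    have : 0 < q - 1 := by omega
    positivity
  have hS : (q-1) * q^2 = q * (q * (q-1)) := by
    have : q^2 = q * q := sq q
    rw [this]; ring
  have hdw : dw q s < q := by
    rw [dw]; rw [hS] at hs
    exact Nat.div_lt_of_lt_mul (hs.trans_eq (mul_comm q (q * (q-1))))
  have hmlt : s % (q * (q-1)) < q * (q-1) := Nat.mod_lt s hM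
  have hdu : du q s < q := by
    rw [du]; exact Nat.div_lt_of_lt_mul (hmlt.trans_eq (mul_comm q (q-1)))
  have hdt : dt q s < q - 1 := Nat.mod_lt _ (by omega)
  have hdv : dv q s < q := by rw [dv]; split <;> omega
  have hne : dv q s ≠ du q s := by rw [dv]; split <;> omega
  have h1 : du q s * (q-1) + dt q s = s % (q * (q-1)) := by
    rw [du, dt, mul_comm]; exact Nat.div_add_mod _ _
  have h2 : dw q s * (q * (q-1)) + s % (q * (q-1)) = s := by
    rw [dw, mul_comm]; exact Nat.div_add_mod _ _
  refine ⟨hdw, hdu, hdv, hne, ?_, hdt, by linarith⟩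
  have hc : (if dv q s < du q s then dv q s else dv q s - 1) = dt q s := by
    rw [dv]; rcases lt_or_ge (dt q s) (du q s) with h | h
    · simp [h]
    · have h1 : ¬ dt q s + 1 < du q s := by omega
      simp [Nat.lt_irrefl, h, if_neg (by omega : ¬ dt q s < du q s), h1]
  rw [enc, hc]
  linarith

lemma col_lt (q a b : ℕ) (ha : a < q) (hb : b < q) : a * q + b < q ^ 2 := by
  calc a * q + b < a * q + q := by omega
    _ = (a + 1) * q := by ring
    _ ≤ q * q := Nat.mul_le_mul_right q (by omega)
    _ = q ^ 2 := (sq q).symm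

lemma kdiv_lt (q : ℕ) (hq : 0 < q) (k : Fin (q^2)) : k.1 / q < q :=
  Nat.div_lt_of_lt_mul (by rw [← sq]; exact k.2)

lemma kmod_lt (q : ℕ) (hq : 0 < q) (k : Fin (q^2)) : k.1 % q < q :=
  Nat.mod_lt _ hq

lemma krepr (q : ℕ) (k : Fin (q^2)) : k.1 / q * q + k.1 % q = k.1 := by
  rw [mul_comm]; exact Nat.div_add_mod _ _

def P (q : ℕ) (hq : 2 ≤ q) (j : Fin (2*q)) (k : Fin (q^2)) :
    Option (Fin ((q-1) * q^2)) :=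
  if hj : j.1 < q then
    if hx : j.1 = k.1 / q then none
    else some ⟨enc q (k.1 % q) (min j.1 (k.1 / q)) (max j.1 (k.1 / q)),
      enc_lt _ _ _ _ hq (kmod_lt q (by omega) k)
        (min_lt_iff.mpr (Or.inl hj))
        (max_lt hj (kdiv_lt q (by omega) k))
        (ne_of_lt (min_lt_max.mpr hx))⟩
  else
    if hx : j.1 - q = k.1 % q then none
    else some ⟨enc q (k.1 / q) (max (j.1 - q) (k.1 % q)) (min (j.1 - q) (k.1 % q)),
      enc_lt _ _ _ _ hq (kdiv_lt q (by omega) k)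
        (max_lt (by have := j.2; omega) (kmod_lt q (by omega) k))
        (min_lt_iff.mpr (Or.inr (kmod_lt q (by omega) k)))
        (ne_of_gt (min_lt_max.mpr hx))⟩

lemma P_none_iff (q : ℕ) (hq : 2 ≤ q) (j : Fin (2*q)) (k : Fin (q^2)) :
    P q hq j k = none ↔
      (j.1 < q ∧ j.1 = k.1 / q) ∨ (¬ j.1 < q ∧ j.1 - q = k.1 % q) := by
  unfold P
  split_ifs with h1 h2 h2 <;> simp_all

lemma P_some_iff (q : ℕ) (hq : 2 ≤ q) (j : Fin (2*q)) (k : Fin (q^2))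
    (s : Fin ((q-1) * q^2)) :
    P q hq j k = some s ↔
      (du q s.1 < dv q s.1 ∧
        ((j.1 = du q s.1 ∧ k.1 = dv q s.1 * q + dw q s.1) ∨
         (j.1 = dv q s.1 ∧ k.1 = du q s.1 * q + dw q s.1)))
      ∨ (dv q s.1 < du q s.1 ∧
        ((j.1 = q + du q s.1 ∧ k.1 = dw q s.1 * q + dv q s.1) ∨
         (j.1 = q + dv q s.1 ∧ k.1 = dw q s.1 * q + du q s.1))) := by
  have hq0 : 0 < q := by omega
  have ha : k.1 / q < q := kdiv_lt q hq0 k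
  have hb : k.1 % q < q := kmod_lt q hq0 k
  have hk : k.1 / q * q + k.1 % q = k.1 := krepr q k
  obtain ⟨hdw, hdu, hdv, hne, henc, hdt, hsum⟩ := decode_lt q s.1 hq s.2
  constructor
  · intro h
    by_cases h1 : j.1 < q
    case neg => ?_
    case pos =>
      by_cases h2 : j.1 = k.1 / q
      · rw [P, dif_pos h1, dif_pos h2] at h; exact absurd h (by simp)
      rw [P, dif_pos h1, dif_neg h2, Option.some.injEq] at h
      have hv : enc q (k.1 % q) (min j.1 (k.1 / q)) (max j.1 (k.1 / q)) = s.1 := by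
        rw [← h]
      have hmm : min j.1 (k.1 / q) < max j.1 (k.1 / q) := min_lt_max.mpr h2
      obtain ⟨e1, e2, e3, e4⟩ := decode_enc q (k.1 % q) (min j.1 (k.1 / q))
        (max j.1 (k.1 / q)) hq hb (min_lt_iff.mpr (Or.inl h1))
        (max_lt h1 ha) (ne_of_lt hmm)
      rw [hv] at e1 e2 e3
      left
      refine ⟨by omega, ?_⟩
      rcases lt_or_gt_of_ne h2 with hlt | hgt
      · left
        have hj' : j.1 = du q s.1 := by omega
        have ha' : k.1 / q = dv q s.1 := by omega
        have hb' : k.1 % q = dw q s.1 := by omega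
        exact ⟨hj', by rw [← ha', ← hb', hk]⟩
      · right
        have hj' : j.1 = dv q s.1 := by omega
        have ha' : k.1 / q = du q s.1 := by omega
        have hb' : k.1 % q = dw q s.1 := by omega
        exact ⟨hj', by rw [← ha', ← hb', hk]⟩
    case neg =>
      by_cases h2 : j.1 - q = k.1 % q
      · rw [P, dif_neg h1, dif_pos h2] at h; exact absurd h (by simp)
      rw [P, dif_neg h1, dif_neg h2, Option.some.injEq] at h
      have hv : enc q (k.1 / q) (max (j.1 - q) (k.1 % q)) (min (j.1 - q) (k.1 % q)) = s.1 := by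
        rw [← h]
      have hx : j.1 - q < q := by have := j.2; omega
      have hmm : min (j.1 - q) (k.1 % q) < max (j.1 - q) (k.1 % q) := min_lt_max.mpr h2
      obtain ⟨e1, e2, e3, e4⟩ := decode_enc q (k.1 / q) (max (j.1 - q) (k.1 % q))
        (min (j.1 - q) (k.1 % q)) hq ha (max_lt hx hb)
        (min_lt_iff.mpr (Or.inl hx)) (ne_of_gt hmm)
      rw [hv] at e1 e2 e3
      right
      refine ⟨by omega, ?_⟩
      rcases lt_or_gt_of_ne h2 with hlt | hgt
      · -- j.1 - q < k.1 % q : max = k%q = du, min = j-q = dv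
        right
        have hj' : j.1 = q + dv q s.1 := by omega
        have ha' : k.1 / q = dw q s.1 := by omega
        have hb' : k.1 % q = du q s.1 := by omega
        exact ⟨hj', by rw [← ha', ← hb', hk]⟩
      · left
        have hj' : j.1 = q + du q s.1 := by omega
        have ha' : k.1 / q = dw q s.1 := by omega
        have hb' : k.1 % q = dv q s.1 := by omega
        exact ⟨hj', by rw [← ha', ← hb', hk]⟩
  · intro h
    unfold P
    rcases h with ⟨huv, h | h⟩ | ⟨hvu, h | h⟩
    · obtain ⟨hj, hkk⟩ := h
      obtain ⟨d1, d2⟩ := divmod q (dv q s.1) (dw q s.1) hq0 hdw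
      have hka : k.1 / q = dv q s.1 := by rw [hkk]; exact d1
      have hkb : k.1 % q = dw q s.1 := by rw [hkk]; exact d2
      rw [dif_pos (by omega), dif_neg (by omega)]
      rw [Option.some.injEq]
      apply Fin.ext
      show enc q (k.1 % q) (min j.1 (k.1 / q)) (max j.1 (k.1 / q)) = s.1
      rw [hka, hkb, hj, min_eq_left (by omega), max_eq_right (by omega)]
      exact henc
    · obtain ⟨hj, hkk⟩ := h
      obtain ⟨d1, d2⟩ := divmod q (du q s.1) (dw q s.1) hq0 hdw
      have hka : k.1 / q = du q s.1 := by rw [hkk]; exact d1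
      have hkb : k.1 % q = dw q s.1 := by rw [hkk]; exact d2
      rw [dif_pos (by omega), dif_neg (by omega)]
      rw [Option.some.injEq]
      apply Fin.ext
      show enc q (k.1 % q) (min j.1 (k.1 / q)) (max j.1 (k.1 / q)) = s.1
      rw [hka, hkb, hj, min_eq_right (by omega), max_eq_left (by omega)]
      exact henc
    · obtain ⟨hj, hkk⟩ := h
      obtain ⟨d1, d2⟩ := divmod q (dw q s.1) (dv q s.1) hq0 hdv
      have hka : k.1 / q = dw q s.1 := by rw [hkk]; exact d1
      have hkb : k.1 % q = dv q s.1 := by rw [hkk]; exact d2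
      rw [dif_neg (by omega), dif_neg (by omega)]
      rw [Option.some.injEq]
      apply Fin.ext
      show enc q (k.1 / q) (max (j.1 - q) (k.1 % q)) (min (j.1 - q) (k.1 % q)) = s.1
      rw [hka, hkb, hj]
      rw [show q + du q s.1 - q = du q s.1 by omega]
      rw [max_eq_left (by omega), min_eq_right (by omega)]
      exact henc
    · obtain ⟨hj, hkk⟩ := h
      obtain ⟨d1, d2⟩ := divmod q (dw q s.1) (du q s.1) hq0 hdu
      have hka : k.1 / q = dw q s.1 := by rw [hkk]; exact d1
      have hkb : k.1 % q = du q s.1 := by rw [hkk]; exact d2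
      rw [dif_neg (by omega), dif_neg (by omega)]
      rw [Option.some.injEq]
      apply Fin.ext
      show enc q (k.1 / q) (max (j.1 - q) (k.1 % q)) (min (j.1 - q) (k.1 % q)) = s.1
      rw [hka, hkb, hj]
      rw [show q + dv q s.1 - q = dv q s.1 by omega]
      rw [max_eq_right (by omega), min_eq_left (by omega)]
      exact henc

lemma tri1_card (q : ℕ) (hq : 2 ≤ q) :
    (((range q) ×ˢ (range (q-1))).filter fun p : ℕ × ℕ => p.2 < p.1).card * 2
      = q * (q-1) := by
  have h1 : (((range q) ×ˢ (range (q-1))).filter fun p : ℕ × ℕ => p.2 < p.1).card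
      = ∑ u ∈ range q, u := by
    rw [Finset.card_eq_sum_card_fiberwise
      (f := Prod.fst) (t := range q)
      (fun p hp => by simp only [Finset.mem_coe, mem_filter, mem_product, mem_range] at hp ⊢; omega)]
    apply Finset.sum_congr rfl
    intro u hu
    rw [mem_range] at hu
    have hset : ((((range q) ×ˢ (range (q-1))).filter fun p : ℕ × ℕ => p.2 < p.1).filter
        fun p => p.1 = u) = {u} ×ˢ range u := by
      ext p
      simp only [mem_filter, mem_product, mem_range, mem_singleton]
      constructor
      · rintro ⟨⟨⟨hp1, hp2⟩, hlt⟩, he⟩; exact ⟨he, by omega⟩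
      · rintro ⟨he, hlt⟩; refine ⟨⟨⟨by omega, by omega⟩, by omega⟩, he⟩
    rw [hset, Finset.card_product, Finset.card_singleton, Finset.card_range, one_mul]
  rw [h1, Finset.sum_range_id_mul_two]

lemma tri2_card (q : ℕ) (hq : 2 ≤ q) :
    (((range q) ×ˢ (range (q-1))).filter fun p : ℕ × ℕ => ¬ p.2 < p.1).card * 2
      = q * (q-1) := by
  have h0 := Finset.card_filter_add_card_filter_not
    (s := (range q) ×ˢ (range (q-1))) (p := fun p : ℕ × ℕ => p.2 < p.1)
  have h2 : ((range q) ×ˢ (range (q-1))).card = q * (q-1) := by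
    rw [Finset.card_product, Finset.card_range, Finset.card_range]
  have h3 := tri1_card q hq
  omega

def phi (q : ℕ) (hq : 2 ≤ q) (s : Fin ((q-1) * q^2)) : Fin (2*q) :=
  if du q s.1 < dv q s.1 then
    ⟨q + dw q s.1, by
      obtain ⟨h1, _, _, _, _, _, _⟩ := decode_lt q s.1 hq s.2; omega⟩
  else
    ⟨dw q s.1, by
      obtain ⟨h1, _, _, _, _, _, _⟩ := decode_lt q s.1 hq s.2; omega⟩

end ExistsBasePDAAux

open ExistsBasePDAAux in
/-- for any q ≥ 2 there exists a 2-regular (q², 2q, 2, (q−1)q²)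
    base PDA with parameter λ = 1. -/
theorem exists_base_pda_q (q : ℕ) (hq : 2 ≤ q) :
    ∃ P : Fin (2 * q) → Fin (q ^ 2) → Option (Fin ((q - 1) * q ^ 2)),
      IsBasePDA 2 1 P ∧ PDARegular 2 P := by
  have hq0 : 0 < q := by omega
  have star0 : ∀ (j : Fin (2*q)) (k : Fin (q^2)) (y : ℕ), y < q → j.1 < q →
      k.1 = j.1 * q + y → P q hq j k = none := by
    intro j k y hy hjq hk
    rw [P_none_iff]
    exact Or.inl ⟨hjq, by rw [hk, (divmod q j.1 y hq0 hy).1]⟩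
  have star1 : ∀ (j : Fin (2*q)) (k : Fin (q^2)) (x : ℕ), x < q → ¬ j.1 < q →
      k.1 = x * q + (j.1 - q) → P q hq j k = none := by
    intro j k x hx hjq hk
    have hlt : j.1 - q < q := by have := j.2; omega
    rw [P_none_iff]
    exact Or.inr ⟨hjq, by rw [hk, (divmod q x (j.1 - q) hq0 hlt).2]⟩
  refine ⟨P q hq, ⟨⟨?_, ?_, ?_⟩, Nat.one_pos, one_dvd _, one_dvd _, ?_, ?_⟩, ?_⟩
  · -- C1: each column has exactly 2 stars
    intro k
    have ha := kdiv_lt q hq0 k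
    have hb := kmod_lt q hq0 k
    have hset : univ.filter (fun j : Fin (2*q) => P q hq j k = none)
        = {(⟨k.1 / q, by omega⟩ : Fin (2*q)), ⟨q + k.1 % q, by omega⟩} := by
      ext j
      have hj2 := j.2
      simp only [mem_filter, mem_univ, true_and, P_none_iff, mem_insert,
        mem_singleton, Fin.ext_iff]
      omega
    rw [hset, Finset.card_insert_of_notMem
      (by simp only [mem_singleton, Fin.ext_iff]; omega), Finset.card_singleton]
  · -- C2: every integer occurs
    intro s
    obtain ⟨hdw, hdu, hdv, hne, henc, hdt, hsum⟩ := decode_lt q s.1 hq s.2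
    rcases lt_or_gt_of_ne hne with h | h
    · exact ⟨⟨q + du q s.1, by omega⟩,
        ⟨dw q s.1 * q + dv q s.1, col_lt q _ _ hdw hdv⟩,
        (P_some_iff q hq _ _ s).mpr (Or.inr ⟨h, Or.inl ⟨rfl, rfl⟩⟩)⟩
    · exact ⟨⟨du q s.1, by omega⟩,
        ⟨dv q s.1 * q + dw q s.1, col_lt q _ _ hdv hdw⟩,
        (P_some_iff q hq _ _ s).mpr (Or.inl ⟨h, Or.inl ⟨rfl, rfl⟩⟩)⟩
  · -- C3: star crossing
    intro j₁ j₂ k₁ k₂ s hne12 h1 h2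
    rw [P_some_iff q hq] at h1 h2
    obtain ⟨hdw, hdu, hdv, hne, henc, hdt, hsum⟩ := decode_lt q s.1 hq s.2
    rcases h1 with ⟨hx, c1 | c1⟩ | ⟨hx, c1 | c1⟩ <;>
      rcases h2 with ⟨hy, c2 | c2⟩ | ⟨hy, c2 | c2⟩ <;>
      first
        | exact absurd hx (by omega)
        | exact absurd (Prod.ext (Fin.ext (c1.1.trans c2.1.symm))
            (Fin.ext (c1.2.trans c2.2.symm))) hne12
        | exact ⟨star0 j₁ k₂ (dw q s.1) hdw (by omega) (by rw [c2.2, c1.1]),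
            star0 j₂ k₁ (dw q s.1) hdw (by omega) (by rw [c1.2, c2.1])⟩
        | exact ⟨star1 j₁ k₂ (dw q s.1) hdw (by omega)
              (by rw [c2.2, c1.1]; congr 1; omega),
            star1 j₂ k₁ (dw q s.1) hdw (by omega)
              (by rw [c1.2, c2.1]; congr 1; omega)⟩
  · -- C4: row-periodic star pattern
    intro j₁ j₂ k h
    rw [Nat.div_one, Nat.mod_eq_of_lt j₁.2, Nat.mod_eq_of_lt j₂.2] at h
    rw [Fin.ext h]
  · -- C5: star rows
    refine ⟨phi q hq, fun s => by rw [Nat.div_one]; exact (phi q hq s).2, ?_, ?_⟩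
    · intro s j k h
      rw [P_some_iff q hq] at h
      obtain ⟨hdw, hdu, hdv, hne, henc, hdt, hsum⟩ := decode_lt q s.1 hq s.2
      rcases h with ⟨hx, c | c⟩ | ⟨hx, c | c⟩
      · have hphi : (phi q hq s).1 = q + dw q s.1 := by
          simp only [phi]; rw [if_pos hx]
        exact star1 (phi q hq s) k (dv q s.1) hdv (by omega)
          (by rw [c.2, hphi]; congr 1; omega)
      · have hphi : (phi q hq s).1 = q + dw q s.1 := by
          simp only [phi]; rw [if_pos hx]
        exact star1 (phi q hq s) k (du q s.1) hdu (by omega)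
          (by rw [c.2, hphi]; congr 1; omega)
      · have hphi : (phi q hq s).1 = dw q s.1 := by
          simp only [phi]; rw [if_neg (by omega)]
        exact star0 (phi q hq s) k (dv q s.1) hdv (by omega) (by rw [c.2, hphi])
      · have hphi : (phi q hq s).1 = dw q s.1 := by
          simp only [phi]; rw [if_neg (by omega)]
        exact star0 (phi q hq s) k (du q s.1) hdu (by omega) (by rw [c.2, hphi])
    · -- fiber counts
      intro r hr
      rw [Nat.div_one] at hr
      by_cases hrq : r.1 < q
      · -- fibers of rows (0,w): type-1 integers
        have hfiber : ∀ s : Fin ((q-1)*q^2), phi q hq s = r →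
            dw q s.1 = r.1 ∧ dt q s.1 < du q s.1 := by
          intro s hs
          obtain ⟨hdw, hdu, hdv, hne, henc, hdt, hsum⟩ := decode_lt q s.1 hq s.2
          have hcase : ¬ du q s.1 < dv q s.1 := by
            intro hlt
            have hv : (phi q hq s).1 = q + dw q s.1 := by
              simp only [phi]; rw [if_pos hlt]
            rw [hs] at hv
            omega
          have hw : (phi q hq s).1 = dw q s.1 := by
            simp only [phi]; rw [if_neg hcase]
          rw [hs] at hw
          have hdtu : dt q s.1 < du q s.1 := by
            by_contra hge
            have : dv q s.1 = dt q s.1 + 1 := by rw [dv, if_neg hge]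
            omega
          exact ⟨hw.symm, hdtu⟩
        have key : (univ.filter fun s : Fin ((q-1)*q^2) => phi q hq s = r).card
            = (((range q) ×ˢ (range (q-1))).filter
                fun p : ℕ × ℕ => p.2 < p.1).card := by
          apply Finset.card_bij (i := fun s _ => (du q s.1, dt q s.1))
          · intro s hs
            simp only [mem_filter, mem_univ, true_and] at hs
            obtain ⟨hdw, hdu, hdv, hne, henc, hdt, hsum⟩ := decode_lt q s.1 hq s.2
            simp only [mem_filter, mem_product, mem_range]
            exact ⟨⟨hdu, hdt⟩, (hfiber s hs).2⟩
          · intro s1 hs1 s2 hs2 hpair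
            simp only [mem_filter, mem_univ, true_and] at hs1 hs2
            have e1 : du q s1.1 = du q s2.1 := congrArg Prod.fst hpair
            have e2 : dt q s1.1 = dt q s2.1 := congrArg Prod.snd hpair
            obtain ⟨_, _, _, _, _, _, hsum1⟩ := decode_lt q s1.1 hq s1.2
            obtain ⟨_, _, _, _, _, _, hsum2⟩ := decode_lt q s2.1 hq s2.2
            have w1 := (hfiber s1 hs1).1
            have w2 := (hfiber s2 hs2).1
            apply Fin.ext
            rw [← hsum1, ← hsum2, e1, e2, w1, w2]
          · intro p hp
            obtain ⟨u, t⟩ := p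
            simp only [mem_filter, mem_product, mem_range] at hp
            obtain ⟨⟨hu, ht⟩, htu⟩ := hp
            set n := r.1 * (q*(q-1)) + u * (q-1) + t with hn
            have henceq : enc q r.1 u t = n := by rw [enc, if_pos htu]
            have hbound : n < (q-1) * q^2 := by
              rw [← henceq]
              exact enc_lt q r.1 u t hq hrq hu (by omega) (by omega)
            obtain ⟨e1, e2, e3, e4⟩ := decode_enc q r.1 u t hq hrq hu
              (by omega) (by omega)
            rw [henceq] at e1 e2 e3 e4
            have e4' : dt q n = t := by rw [e4, if_pos htu]
            refine ⟨⟨n, hbound⟩, ?_, ?_⟩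
            · simp only [mem_filter, mem_univ, true_and]
              apply Fin.ext
              show (phi q hq ⟨n, hbound⟩).1 = r.1
              simp only [phi]
              rw [if_neg (by show ¬ du q n < dv q n; omega)]
              exact e1
            · show (du q n, dt q n) = (u, t)
              rw [e2, e4']
        rw [key]
        have h3 := tri1_card q hq
        calc (((range q) ×ˢ (range (q-1))).filter
                fun p : ℕ × ℕ => p.2 < p.1).card * (2*q)
            = ((((range q) ×ˢ (range (q-1))).filter
                fun p : ℕ × ℕ => p.2 < p.1).card * 2) * q := by ring
          _ = q * (q-1) * q := by rw [h3]
          _ = 1 * ((q-1) * q^2) := by rw [one_mul, sq]; ring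
      · -- fibers of rows (1,w): type-0 integers
        have hfiber : ∀ s : Fin ((q-1)*q^2), phi q hq s = r →
            dw q s.1 = r.1 - q ∧ ¬ dt q s.1 < du q s.1 := by
          intro s hs
          obtain ⟨hdw, hdu, hdv, hne, henc, hdt, hsum⟩ := decode_lt q s.1 hq s.2
          have hcase : du q s.1 < dv q s.1 := by
            by_contra hlt
            have hv : (phi q hq s).1 = dw q s.1 := by
              simp only [phi]; rw [if_neg hlt]
            rw [hs] at hv
            omega
          have hw : (phi q hq s).1 = q + dw q s.1 := by
            simp only [phi]; rw [if_pos hcase]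
          rw [hs] at hw
          have hdtu : ¬ dt q s.1 < du q s.1 := by
            intro hlt2
            rw [dv, if_pos hlt2] at hcase
            omega
          exact ⟨by omega, hdtu⟩
        have key : (univ.filter fun s : Fin ((q-1)*q^2) => phi q hq s = r).card
            = (((range q) ×ˢ (range (q-1))).filter
                fun p : ℕ × ℕ => ¬ p.2 < p.1).card := by
          apply Finset.card_bij (i := fun s _ => (du q s.1, dt q s.1))
          · intro s hs
            simp only [mem_filter, mem_univ, true_and] at hs
            obtain ⟨hdw, hdu, hdv, hne, henc, hdt, hsum⟩ := decode_lt q s.1 hq s.2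
            simp only [mem_filter, mem_product, mem_range]
            exact ⟨⟨hdu, hdt⟩, (hfiber s hs).2⟩
          · intro s1 hs1 s2 hs2 hpair
            simp only [mem_filter, mem_univ, true_and] at hs1 hs2
            have e1 : du q s1.1 = du q s2.1 := congrArg Prod.fst hpair
            have e2 : dt q s1.1 = dt q s2.1 := congrArg Prod.snd hpair
            obtain ⟨_, _, _, _, _, _, hsum1⟩ := decode_lt q s1.1 hq s1.2
            obtain ⟨_, _, _, _, _, _, hsum2⟩ := decode_lt q s2.1 hq s2.2
            have w1 := (hfiber s1 hs1).1
            have w2 := (hfiber s2 hs2).1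
            apply Fin.ext
            rw [← hsum1, ← hsum2, e1, e2, w1, w2]
          · intro p hp
            obtain ⟨u, t⟩ := p
            simp only [mem_filter, mem_product, mem_range] at hp
            obtain ⟨⟨hu, ht⟩, htu⟩ := hp
            set n := (r.1 - q) * (q*(q-1)) + u * (q-1) + t with hn
            have henceq : enc q (r.1 - q) u (t+1) = n := by
              rw [enc, if_neg (by omega), Nat.add_sub_cancel]
            have hbound : n < (q-1) * q^2 := by
              rw [← henceq]
              exact enc_lt q (r.1 - q) u (t+1) hq (by omega) hu (by omega) (by omega)
            obtain ⟨e1, e2, e3, e4⟩ := decode_enc q (r.1 - q) u (t+1) hq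
              (by omega) hu (by omega) (by omega)
            rw [henceq] at e1 e2 e3 e4
            have e4' : dt q n = t := by
              rw [e4, if_neg (by omega), Nat.add_sub_cancel]
            refine ⟨⟨n, hbound⟩, ?_, ?_⟩
            · simp only [mem_filter, mem_univ, true_and]
              apply Fin.ext
              show (phi q hq ⟨n, hbound⟩).1 = r.1
              simp only [phi]
              rw [if_pos (by show du q n < dv q n; omega)]
              show q + dw q n = r.1
              omega
            · show (du q n, dt q n) = (u, t)
              rw [e2, e4']
        rw [key]
        have h3 := tri2_card q hq
        calc (((range q) ×ˢ (range (q-1))).filter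
                fun p : ℕ × ℕ => ¬ p.2 < p.1).card * (2*q)
            = ((((range q) ×ˢ (range (q-1))).filter
                fun p : ℕ × ℕ => ¬ p.2 < p.1).card * 2) * q := by ring
          _ = q * (q-1) * q := by rw [h3]
          _ = 1 * ((q-1) * q^2) := by rw [one_mul, sq]; ring
  · -- 2-regular
    intro s
    obtain ⟨hdw, hdu, hdv, hne, henc, hdt, hsum⟩ := decode_lt q s.1 hq s.2
    rcases lt_or_gt_of_ne hne with h | h
    · -- dv < du : type-1 cells
      have hset : (univ.filter fun jk : Fin (2*q) × Fin (q^2) =>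
          P q hq jk.1 jk.2 = some s)
          = {((⟨q + du q s.1, by omega⟩ : Fin (2*q)),
              (⟨dw q s.1 * q + dv q s.1, col_lt q _ _ hdw hdv⟩ : Fin (q^2))),
             ((⟨q + dv q s.1, by omega⟩ : Fin (2*q)),
              (⟨dw q s.1 * q + du q s.1, col_lt q _ _ hdw hdu⟩ : Fin (q^2)))} := by
        ext jk
        simp only [mem_filter, mem_univ, true_and, mem_insert, mem_singleton]
        rw [P_some_iff q hq jk.1 jk.2 s]
        constructor
        · rintro (⟨hx, ⟨e1, e2⟩ | ⟨e1, e2⟩⟩ | ⟨hx, ⟨e1, e2⟩ | ⟨e1, e2⟩⟩)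
          · exact absurd hx (by omega)
          · exact absurd hx (by omega)
          · exact Or.inl (Prod.ext (Fin.ext e1) (Fin.ext e2))
          · exact Or.inr (Prod.ext (Fin.ext e1) (Fin.ext e2))
        · rintro (rfl | rfl)
          · exact Or.inr ⟨h, Or.inl ⟨rfl, rfl⟩⟩
          · exact Or.inr ⟨h, Or.inr ⟨rfl, rfl⟩⟩
      rw [hset, Finset.card_insert_of_notMem, Finset.card_singleton]
      simp only [mem_singleton, Prod.mk.injEq, Fin.mk.injEq, not_and]
      intro ha
      exact absurd ha (by omega)
    · -- du < dv : type-0 cells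
      have hset : (univ.filter fun jk : Fin (2*q) × Fin (q^2) =>
          P q hq jk.1 jk.2 = some s)
          = {((⟨du q s.1, by omega⟩ : Fin (2*q)),
              (⟨dv q s.1 * q + dw q s.1, col_lt q _ _ hdv hdw⟩ : Fin (q^2))),
             ((⟨dv q s.1, by omega⟩ : Fin (2*q)),
              (⟨du q s.1 * q + dw q s.1, col_lt q _ _ hdu hdw⟩ : Fin (q^2)))} := by
        ext jk
        simp only [mem_filter, mem_univ, true_and, mem_insert, mem_singleton]
        rw [P_some_iff q hq jk.1 jk.2 s]
        constructor
        · rintro (⟨hx, ⟨e1, e2⟩ | ⟨e1, e2⟩⟩ | ⟨hx, ⟨e1, e2⟩ | ⟨e1, e2⟩⟩)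
          · exact Or.inl (Prod.ext (Fin.ext e1) (Fin.ext e2))
          · exact Or.inr (Prod.ext (Fin.ext e1) (Fin.ext e2))
          · exact absurd hx (by omega)
          · exact absurd hx (by omega)
        · rintro (rfl | rfl)
          · exact Or.inl ⟨h, Or.inl ⟨rfl, rfl⟩⟩
          · exact Or.inl ⟨h, Or.inr ⟨rfl, rfl⟩⟩
      rw [hset, Finset.card_insert_of_notMem, Finset.card_singleton]
      simp only [mem_singleton, Prod.mk.injEq, Fin.mk.injEq, not_and]
      intro ha
      exact absurd ha (by omega)
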